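/- No non-trivial additive kernel on persistence diagrams is stable with respect to the p-Wasserstein distance for p > 1: if k is symmetric, positive definite, additive (k(E∪F,G)=k(E,G)+k(F,G)), and there exists F with k(F,F) > 0, then for every constant C > 0 and every p with 1 < p ≤ ∞ there exist diagrams A, B with d_k(A,B) > C · d_{W,p}(A,B). -/

import Mathlib

open Real

/-- The ℓ∞ distance between two points of ℝ². -/
noncomputable def linfDist (u v : EuclideanSpace ℝ (Fin 2)) : ℝ :=
  max |u 0 - v 0| |u 1 - v 1|

/-- The p-Wasserstein distance between persistence diagrams (finite multisets of points),
defined as the infimum of the matching costs over all bijective matchings M between the two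
diagrams, each augmented by finitely many points on the diagonal. -/
noncomputable def dW (p : ℝ)
    (A B : Multiset (EuclideanSpace ℝ (Fin 2))) : ℝ :=
  sInf {c : ℝ |
    ∃ M : Multiset (EuclideanSpace ℝ (Fin 2) × EuclideanSpace ℝ (Fin 2)),
      (∃ DA, (∀ u ∈ DA, u 0 = u 1) ∧ M.map Prod.fst = A + DA) ∧
      (∃ DB, (∀ u ∈ DB, u 0 = u 1) ∧ M.map Prod.snd = B + DB) ∧
      c = ((M.map (fun uv => linfDist uv.1 uv.2 ^ p)).sum) ^ (1 / p)}

/-- The bottleneck distance between persistence diagrams: the infimum over all c ≥ 0 such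
that some bijective matching between the augmented diagrams moves every point at
ℓ∞-distance at most c. -/
noncomputable def dB (A B : Multiset (EuclideanSpace ℝ (Fin 2))) : ℝ :=
  sInf {c : ℝ | 0 ≤ c ∧
    ∃ M : Multiset (EuclideanSpace ℝ (Fin 2) × EuclideanSpace ℝ (Fin 2)),
      (∃ DA, (∀ u ∈ DA, u 0 = u 1) ∧ M.map Prod.fst = A + DA) ∧
      (∃ DB, (∀ u ∈ DB, u 0 = u 1) ∧ M.map Prod.snd = B + DB) ∧
      ∀ uv ∈ M, linfDist uv.1 uv.2 ≤ c}

/-- A point on the diagonal associated with a point `u`. -/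
noncomputable def diagPt (u : EuclideanSpace ℝ (Fin 2)) : EuclideanSpace ℝ (Fin 2) :=
  WithLp.toLp 2 (fun _ => u 0)

lemma linfDist_nonneg (u v : EuclideanSpace ℝ (Fin 2)) : 0 ≤ linfDist u v :=
  le_trans (abs_nonneg _) (le_max_left _ _)

/-- no non-trivial additive positive definite kernel on persistence diagrams
is stable w.r.t. the p-Wasserstein distance for any 1 < p ≤ ∞ (the case p = ∞ being the
bottleneck distance). -/
theorem no_additive_kernel_stable
    (k : Multiset (EuclideanSpace ℝ (Fin 2)) → Multiset (EuclideanSpace ℝ (Fin 2)) → ℝ)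
    (hsymm : ∀ F G, k F G = k G F)
    (hposdef : ∀ (m : ℕ) (F : Fin m → Multiset (EuclideanSpace ℝ (Fin 2))) (c : Fin m → ℝ),
      0 ≤ ∑ i, ∑ j, c i * c j * k (F i) (F j))
    (hadd : ∀ E F G, k (E + F) G = k E G + k F G)
    (hnontriv : ∃ F, 0 < k F F) :
    ∀ C : ℝ, 0 < C →
      (∀ p : ℝ, 1 < p →
        ∃ A B, C * dW p A B < Real.sqrt (k A A + k B B - 2 * k A B)) ∧
      (∃ A B, C * dB A B < Real.sqrt (k A A + k B B - 2 * k A B)) := by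
  obtain ⟨F, hF⟩ := hnontriv
  set s : ℝ := Real.sqrt (k F F) with hs_def
  have hs : 0 < s := Real.sqrt_pos.mpr hF
  have hzero : ∀ G, k 0 G = 0 := by
    intro G
    have h := hadd 0 0 G
    simp only [add_zero] at h
    linarith
  have hsmul : ∀ (n : ℕ) (G), k (n • F) G = n * k F G := by
    intro n G
    induction n with
    | zero => simpa using hzero G
    | succ m ih =>
      rw [succ_nsmul, hadd, ih]
      push_cast
      ring
  have hsqrt : ∀ n : ℕ, Real.sqrt (k (n • F) (n • F) + k 0 0 - 2 * k (n • F) 0) = n * s := by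
    intro n
    have h1 : k (n • F) (n • F) = (n : ℝ) ^ 2 * k F F := by
      rw [hsmul, hsymm, hsmul]; ring
    have h2 : k (n • F) 0 = 0 := by rw [hsymm, hzero]
    rw [h1, h2, hzero, hs_def,
      show (n:ℝ)^2 * k F F + 0 - 2 * 0 = (n:ℝ)^2 * k F F by ring,
      Real.sqrt_mul (sq_nonneg _), Real.sqrt_sq (Nat.cast_nonneg n)]
  -- the canonical matching of `n • F` against the empty diagram
  have hMfst : ∀ n : ℕ, ∃ DA, (∀ u ∈ DA, u 0 = u 1) ∧
      (((n • F).map (fun u => (u, diagPt u))).map Prod.fst) = n • F + DA := by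
    intro n
    exact ⟨0, by simp, by simp [Multiset.map_map]⟩
  have hMsnd : ∀ n : ℕ, ∃ DB, (∀ u ∈ DB, u 0 = u 1) ∧
      (((n • F).map (fun u => (u, diagPt u))).map Prod.snd) = (0 : Multiset _) + DB := by
    intro n
    refine ⟨(n • F).map diagPt, ?_, by simp [Multiset.map_map]⟩
    intro u hu
    obtain ⟨v, _, rfl⟩ := Multiset.mem_map.mp hu
    rfl
  intro C hC
  constructor
  · -- Wasserstein part
    intro p hp
    have hp0 : 0 < p := lt_trans one_pos hp
    have hpinv : 0 < 1 / p := by positivity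
    set q : ℝ := 1 - 1 / p with hq_def
    have hq : 0 < q := by
      have h1 : 1 / p < 1 := by
        rw [div_lt_one hp0]; exact hp
      rw [hq_def]; linarith
    set T : ℝ := (F.map (fun u => linfDist u (diagPt u) ^ p)).sum with hT_def
    have hT : 0 ≤ T := by
      apply Multiset.sum_nonneg
      intro x hx
      obtain ⟨u, _, rfl⟩ := Multiset.mem_map.mp hx
      exact Real.rpow_nonneg (linfDist_nonneg _ _) p
    set K : ℝ := C * T ^ (1 / p) / s with hK_def
    have hK : 0 ≤ K := by
      have := Real.rpow_nonneg hT (1 / p)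
      positivity
    obtain ⟨n, hn⟩ := exists_nat_gt (max 1 (K ^ (1 / q)))
    have hn1 : (1 : ℝ) < n := lt_of_le_of_lt (le_max_left _ _) hn
    have hn0 : (0 : ℝ) < n := lt_trans one_pos hn1
    refine ⟨n • F, 0, ?_⟩
    rw [hsqrt n]
    have hle : dW p (n • F) 0 ≤ ((n : ℝ) * T) ^ (1 / p) := by
      apply csInf_le
      · refine ⟨0, ?_⟩
        rintro c ⟨M, _, _, rfl⟩
        apply Real.rpow_nonneg
        apply Multiset.sum_nonneg
        intro x hx
        obtain ⟨uv, _, rfl⟩ := Multiset.mem_map.mp hx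
        exact Real.rpow_nonneg (linfDist_nonneg _ _) p
      · refine ⟨(n • F).map (fun u => (u, diagPt u)), hMfst n, hMsnd n, ?_⟩
        congr 1
        rw [Multiset.map_map]
        have : ((n • F).map (fun u => linfDist u (diagPt u) ^ p)).sum = (n : ℝ) * T := by
          rw [Multiset.map_nsmul, Multiset.sum_nsmul, hT_def, nsmul_eq_mul]
        rw [← this]
        rfl
    have hKlt : K < (n : ℝ) ^ q := by
      have h1 : K ^ (1 / q) < (n : ℝ) := lt_of_le_of_lt (le_max_right _ _) hn
      have h2 := Real.rpow_lt_rpow (Real.rpow_nonneg hK _) h1 hq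
      rwa [← Real.rpow_mul hK, one_div_mul_cancel hq.ne', Real.rpow_one] at h2
    have key : C * ((n : ℝ) * T) ^ (1 / p) < n * s := by
      rw [Real.mul_rpow hn0.le hT]
      have hsplit : (n : ℝ) = (n : ℝ) ^ (1 / p) * (n : ℝ) ^ q := by
        rw [← Real.rpow_add hn0, hq_def]
        norm_num
      calc C * ((n : ℝ) ^ (1 / p) * T ^ (1 / p))
          = (n : ℝ) ^ (1 / p) * (C * T ^ (1 / p)) := by ring
        _ = (n : ℝ) ^ (1 / p) * (K * s) := by
            rw [hK_def, div_mul_cancel₀ _ hs.ne']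
        _ < (n : ℝ) ^ (1 / p) * ((n : ℝ) ^ q * s) := by
            apply mul_lt_mul_of_pos_left _ (Real.rpow_pos_of_pos hn0 _)
            exact mul_lt_mul_of_pos_right hKlt hs
        _ = ((n : ℝ) ^ (1 / p) * (n : ℝ) ^ q) * s := by ring
        _ = (n : ℝ) * s := by rw [← hsplit]
    calc C * dW p (n • F) 0 ≤ C * ((n : ℝ) * T) ^ (1 / p) :=
          mul_le_mul_of_nonneg_left hle hC.le
      _ < n * s := key
  · -- bottleneck part
    set T : ℝ := (F.map (fun u => linfDist u (diagPt u))).sum with hT_def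
    have hT : 0 ≤ T := by
      apply Multiset.sum_nonneg
      intro x hx
      obtain ⟨u, _, rfl⟩ := Multiset.mem_map.mp hx
      exact linfDist_nonneg _ _
    obtain ⟨n, hn⟩ := exists_nat_gt (C * T / s)
    have hn0 : (0 : ℝ) < n := lt_of_le_of_lt (by positivity) hn
    refine ⟨n • F, 0, ?_⟩
    rw [hsqrt n]
    have hle : dB (n • F) 0 ≤ T := by
      apply csInf_le
      · exact ⟨0, fun c hc => hc.1⟩
      · refine ⟨hT, (n • F).map (fun u => (u, diagPt u)), hMfst n, hMsnd n, ?_⟩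
        rintro uv huv
        obtain ⟨v, hv, rfl⟩ := Multiset.mem_map.mp huv
        have hvF : v ∈ F := (Multiset.mem_nsmul.mp hv).2
        exact Multiset.single_le_sum
          (fun x hx => by
            obtain ⟨u, _, rfl⟩ := Multiset.mem_map.mp hx
            exact linfDist_nonneg _ _) _
          (Multiset.mem_map_of_mem _ hvF)
    calc C * dB (n • F) 0 ≤ C * T := mul_le_mul_of_nonneg_left hle hC.le
      _ < n * s := by
          rw [← div_lt_iff₀ hs] at *
          linarith [hn]
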